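/- arXiv:1706.00380 — 2 statements merged into one kernel-verified Lean document; each statement's English description precedes it below -/
import Mathlib

section
/- Let k ≥ 1 and let ∂ : ℤ^{k+1} → ℤ^k be the ℤ-linear map with ∂e_0 = f_1, ∂e_i = 2·f_i − f_{i+1} for 1 ≤ i ≤ k−1, and ∂e_k = f_k. Then every element z of the kernel of ∂ is an integer multiple of ζ_k = 2^{k−1}·e_0 − Σ_{i=1}^{k−1} 2^{k−1−i}·e_i − e_k; in particular, the kernel of ∂ is the infinite cyclic group generated by ζ_k. -/
/-- The cycle `ζ_k = 2^{k−1}·e_0 − Σ_{i=1}^{k−1} 2^{k−1−i}·e_i − e_k` in `ℤ^{k+1}`,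
where `e_0, …, e_k` is the standard basis. -/
def zetaCycle (k : ℕ) : Fin (k + 1) → ℤ :=
  (2 ^ (k - 1) : ℤ) • Pi.single (⟨0, Nat.succ_pos k⟩ : Fin (k + 1)) (1 : ℤ)
    - ∑ i ∈ (Finset.Ico 1 k).attach,
        (2 ^ (k - 1 - i.1) : ℤ) •
          Pi.single (⟨i.1, by have := (Finset.mem_Ico.mp i.2).2; omega⟩ : Fin (k + 1)) (1 : ℤ)
    - Pi.single (⟨k, by omega⟩ : Fin (k + 1)) (1 : ℤ)

lemma zeta_apply (k : ℕ) (hk : 1 ≤ k) (i : Fin (k + 1)) :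
    zetaCycle k i = if (i : ℕ) = 0 then 2 ^ (k - 1)
      else if (i : ℕ) = k then -1 else -(2 ^ (k - 1 - (i : ℕ))) := by
  unfold zetaCycle
  simp only [Pi.sub_apply, Pi.smul_apply, smul_eq_mul, Finset.sum_apply,
    Pi.single_apply, Fin.ext_iff]
  rw [Finset.sum_congr rfl (fun j _ => by
    rw [show ((2:ℤ) ^ (k - 1 - j.1) * if (i:ℕ) = j.1 then 1 else 0)
      = if j.1 = (i:ℕ) then 2 ^ (k - 1 - j.1) else 0 by split_ifs <;> simp_all <;> omega]),
    Finset.sum_attach (Finset.Ico 1 k) (fun n => if n = (i:ℕ) then (2:ℤ) ^ (k - 1 - n) else 0),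
    Finset.sum_ite_eq' (Finset.Ico 1 k) (i:ℕ) (fun n => (2:ℤ) ^ (k - 1 - n))]
  have hi := i.isLt
  split_ifs with h1 h2 h3 h4 h5 <;> simp_all [Finset.mem_Ico, -Fin.val_eq_zero_iff] <;> omega


lemma D_apply (k : ℕ) (hk : 1 ≤ k)
    (D : (Fin (k + 1) → ℤ) →ₗ[ℤ] (Fin k → ℤ))
    (hD0 : D (Pi.single (⟨0, by have := hk; omega⟩ : Fin (k + 1)) 1) =
      Pi.single (⟨0, by have := hk; omega⟩ : Fin k) 1)
    (hDmid : ∀ (i : ℕ) (_h1 : 1 ≤ i) (_h2 : i ≤ k - 1),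
      D (Pi.single (⟨i, by have := hk; omega⟩ : Fin (k + 1)) 1) =
        (2 : ℤ) • Pi.single (⟨i - 1, by have := hk; omega⟩ : Fin k) 1
          - Pi.single (⟨i, by have := hk; omega⟩ : Fin k) 1)
    (hDk : D (Pi.single (⟨k, by have := hk; omega⟩ : Fin (k + 1)) 1) =
      Pi.single (⟨k - 1, by have := hk; omega⟩ : Fin k) 1)
    (z : Fin (k + 1) → ℤ) (m : Fin k) :
    D z m = z ⟨m.1, by omega⟩ * (if (m : ℕ) = 0 then 1 else -1)
      + z ⟨m.1 + 1, by omega⟩ * (if (m : ℕ) + 1 = k then 1 else 2) := by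
  have hm := m.isLt
  have hrep : z = ∑ j : Fin (k + 1), Pi.single j (z j) := (Finset.univ_sum_single z).symm
  have h1 : ∀ j : Fin (k + 1), Pi.single j (z j) = z j • (Pi.single j 1 : Fin (k + 1) → ℤ) := by
    intro j; funext t; simp [Pi.single_apply]
  have hDz : D z = ∑ j : Fin (k + 1), z j • D (Pi.single j (1 : ℤ)) := by
    conv_lhs => rw [hrep]
    rw [map_sum]
    exact Finset.sum_congr rfl fun j _ => by rw [h1, map_smul]
  have hj : ∀ j : Fin (k + 1), D (Pi.single j (1 : ℤ)) m
      = (if j = (⟨m.1, by omega⟩ : Fin (k + 1)) then (if (m : ℕ) = 0 then (1:ℤ) else -1) else 0)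
      + (if j = (⟨m.1 + 1, by omega⟩ : Fin (k + 1)) then (if (m : ℕ) + 1 = k then (1:ℤ) else 2) else 0) := by
    intro j
    have hjk := j.isLt
    by_cases hj0 : (j : ℕ) = 0
    · rw [show j = (⟨0, by omega⟩ : Fin (k + 1)) from Fin.ext hj0, hD0]
      simp only [Pi.single_apply, Fin.ext_iff]
      split_ifs <;> first | omega | exact ‹False›.elim
    · by_cases hjK : (j : ℕ) = k
      · rw [show j = (⟨k, by omega⟩ : Fin (k + 1)) from Fin.ext hjK, hDk]
        simp only [Pi.single_apply, Fin.ext_iff]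
        split_ifs <;> first | omega | exact ‹False›.elim
      · have hj1 : 1 ≤ (j : ℕ) := by omega
        have hj2 : (j : ℕ) ≤ k - 1 := by omega
        have h := hDmid (j : ℕ) hj1 hj2
        rw [Fin.eta] at h
        rw [h]
        simp only [Pi.sub_apply, Pi.smul_apply, Pi.single_apply, smul_eq_mul, Fin.ext_iff]
        split_ifs <;> first | omega | exact ‹False›.elim
  rw [hDz, Finset.sum_apply]
  simp only [Pi.smul_apply, smul_eq_mul, hj, mul_add, Finset.sum_add_distrib, mul_ite, mul_zero,
    Finset.sum_ite_eq', Finset.mem_univ, if_true]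


private lemma zapp_congr {n : ℕ} (z : Fin n → ℤ) {a b : ℕ} (hab : a = b) (ha : a < n) :
    z ⟨a, ha⟩ = z ⟨b, hab ▸ ha⟩ := by subst hab; rfl

set_option maxHeartbeats 1000000 in
/-- Let `k ≥ 1` and let `∂ : ℤ^{k+1} → ℤ^k` be the ℤ-linear map with `∂e_0 = f_1`,
`∂e_i = 2·f_i − f_{i+1}` for `1 ≤ i ≤ k−1`, and `∂e_k = f_k`.  Then every element `z` of
the kernel of `∂` is an integer multiple of
`ζ_k = 2^{k−1}·e_0 − Σ_{i=1}^{k−1} 2^{k−1−i}·e_i − e_k`; in particular, the kernel of `∂`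
is the (infinite) cyclic group generated by `ζ_k`, and `ζ_k ≠ 0`. -/
theorem ker_eq_multiples_of_zeta (k : ℕ) (hk : 1 ≤ k)
    (D : (Fin (k + 1) → ℤ) →ₗ[ℤ] (Fin k → ℤ))
    (hD0 : D (Pi.single (⟨0, by omega⟩ : Fin (k + 1)) 1) =
      Pi.single (⟨0, by omega⟩ : Fin k) 1)
    (hDmid : ∀ (i : ℕ) (_h1 : 1 ≤ i) (_h2 : i ≤ k - 1),
      D (Pi.single (⟨i, by omega⟩ : Fin (k + 1)) 1) =
        (2 : ℤ) • Pi.single (⟨i - 1, by omega⟩ : Fin k) 1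
          - Pi.single (⟨i, by omega⟩ : Fin k) 1)
    (hDk : D (Pi.single (⟨k, by omega⟩ : Fin (k + 1)) 1) =
      Pi.single (⟨k - 1, by omega⟩ : Fin k) 1) :
    (∀ z : Fin (k + 1) → ℤ, D z = 0 → ∃ c : ℤ, z = c • zetaCycle k) ∧
      LinearMap.ker D = Submodule.span ℤ {zetaCycle k} ∧ zetaCycle k ≠ 0 := by

  have key := D_apply k hk D hD0 hDmid hDk
  -- D (zetaCycle k) = 0
  have hDzeta : D (zetaCycle k) = 0 := by
    funext m
    have hm := m.isLt
    rw [key, zeta_apply k hk, zeta_apply k hk]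
    simp only [Pi.zero_apply]
    split_ifs <;>
      first
        | exact ‹False›.elim
        | omega
        | (rw [show k - 1 - (m : ℕ) = (k - 1 - ((m : ℕ) + 1)) + 1 from by omega, pow_succ]; ring)
        | (rw [show k - 1 - (m : ℕ) = 0 from by omega]; ring)
        | (rw [show k - 1 = 0 from by omega]; ring)
        | (rw [show ((2:ℤ)) ^ (k - 1) = 2 ^ (k - 1 - (1 + (m : ℕ))) * 2 from by
              rw [← pow_succ]; congr 1; omega]; ring)
        | ring
  -- every kernel element is a multiple of zeta
  have part1 : ∀ z : Fin (k + 1) → ℤ, D z = 0 → ∃ c : ℤ, z = c • zetaCycle k := by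
    intro z hz
    have rel : ∀ (t : ℕ) (_ht : t < k),
        z ⟨t, by omega⟩ * (if t = 0 then 1 else -1)
          + z ⟨t + 1, by omega⟩ * (if t + 1 = k then 1 else 2) = 0 := by
      intro t ht
      have h := key z ⟨t, ht⟩
      rw [hz] at h
      simpa using h.symm
    have claim : ∀ d : ℕ, 1 ≤ d → d ≤ k - 1 →
        z ⟨k - d, by omega⟩ = 2 ^ (d - 1) * z ⟨k, by omega⟩ := by
      intro d
      induction d with
      | zero => omega
      | succ n ih =>
        intro _ hle
        rcases Nat.eq_zero_or_pos n with rfl | hn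
        · have h := rel (k - 1) (by omega)
          rw [if_neg (by omega), if_pos (by omega)] at h
          rw [zapp_congr z (show k - 1 + 1 = k from by omega)] at h
          rw [show 0 + 1 - 1 = 0 from rfl, pow_zero]
          linarith [h]
        · have h := rel (k - (n + 1)) (by omega)
          rw [if_neg (by omega), if_neg (by omega)] at h
          rw [zapp_congr z (show k - (n + 1) + 1 = k - n from by omega)] at h
          have ihn := ih hn (by omega)
          rw [show n + 1 - 1 = (n - 1) + 1 from by omega, pow_succ]
          rw [ihn] at h
          linarith [h]
    refine ⟨-z ⟨k, by omega⟩, ?_⟩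
    funext i
    have hi := i.isLt
    rw [Pi.smul_apply, smul_eq_mul, zeta_apply k hk]
    by_cases h0 : (i : ℕ) = 0
    · rw [if_pos h0]
      have hieq : i = (⟨0, by omega⟩ : Fin (k + 1)) := Fin.ext h0
      rw [hieq]
      have h := rel 0 (by omega)
      rw [if_pos rfl, zapp_congr z (show 0 + 1 = 1 from rfl)] at h
      by_cases hk1 : k = 1
      · rw [if_pos (by omega)] at h
        rw [zapp_congr z (show (1:ℕ) = k from hk1.symm)] at h
        rw [show k - 1 = 0 from by omega, pow_zero]
        linarith [h]
      · rw [if_neg (by omega)] at h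
        have h1 := claim (k - 1) (by omega) (by omega)
        rw [zapp_congr z (show k - (k - 1) = 1 from by omega)] at h1
        rw [h1] at h
        rw [show k - 1 = (k - 1 - 1) + 1 from by omega, pow_succ,
          show k - 1 - 1 = k - 1 - 1 - 0 from rfl]
        rw [show k - 1 - 1 - 0 = k - 1 - 1 from rfl]
        linarith [h]
    · by_cases hK : (i : ℕ) = k
      · rw [if_neg h0, if_pos hK]
        have hieq : i = (⟨k, by omega⟩ : Fin (k + 1)) := Fin.ext hK
        rw [hieq]; ring
      · rw [if_neg h0, if_neg hK]
        have h := claim (k - (i : ℕ)) (by omega) (by omega)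
        rw [show k - (i : ℕ) - 1 = k - 1 - (i : ℕ) from by omega] at h
        rw [zapp_congr z (show k - (k - (i : ℕ)) = (i : ℕ) from by omega)] at h
        have hieq : i = (⟨(i : ℕ), by omega⟩ : Fin (k + 1)) := Fin.ext rfl
        rw [show z i = z ⟨(i : ℕ), by omega⟩ from by rw [← hieq], h]
        ring
  refine ⟨part1, ?_, ?_⟩
  · apply le_antisymm
    · intro z hz
      obtain ⟨c, hc⟩ := part1 z (LinearMap.mem_ker.mp hz)
      exact Submodule.mem_span_singleton.mpr ⟨c, hc.symm⟩
    · rw [Submodule.span_singleton_le_iff_mem, LinearMap.mem_ker]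
      exact hDzeta
  · intro h
    have := congrFun h ⟨k, by omega⟩
    rw [zeta_apply k hk] at this
    simp [show k ≠ 0 from by omega] at this
end

section
/- In any group G, for all elements x, y, a, b one has the decomposition [x,y] = ((xy)·[x⁻¹, y⁻¹·b]·(xy)⁻¹) · [x·b·x⁻¹, a·x⁻¹] · [a,b]. (In the paper this is applied with a, b the conical parts x̂, ŷ of x, y, so that y⁻¹·b and a·x⁻¹ are spherical; it reduces contraction of an arbitrary commutator to contractions of commutators with one spherical entry.) -/
open scoped commutatorElement

/-- Berger's commutator decomposition: in any group `G`, for all `x, y, a, b` one has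
`[x,y] = ((xy)·[x⁻¹, y⁻¹·b]·(xy)⁻¹) · [x·b·x⁻¹, a·x⁻¹] · [a,b]`. -/
theorem commutator_decomposition {G : Type*} [Group G] (x y a b : G) :
    ⁅x, y⁆ =
      ((x * y) * ⁅x⁻¹, y⁻¹ * b⁆ * (x * y)⁻¹) * ⁅x * b * x⁻¹, a * x⁻¹⁆ * ⁅a, b⁆ := by
  group
end
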